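/- The number of 3×3 symmetric matrices with nonnegative integer entries whose rows all sum to r equals (1/4)r³ + (9/8)r² + (7/4)r + 1 if r is even, and (1/4)r³ + (9/8)r² + (7/4)r + 7/8 if r is odd. -/

import Mathlib

open Finset

private def Tri (n : ℕ) : Finset (ℕ × ℕ) :=
  (range (n+1)).biUnion (fun s => Finset.HasAntidiagonal.antidiagonal s)

private lemma mem_Tri {n a b : ℕ} : (a, b) ∈ Tri n ↔ a + b ≤ n := by
  simp only [Tri, mem_biUnion, mem_range, Finset.HasAntidiagonal.mem_antidiagonal, Nat.lt_succ_iff]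
  constructor
  · rintro ⟨s, hs, rfl⟩; exact hs
  · intro h; exact ⟨a + b, h, rfl⟩

private lemma card_Tri (n : ℕ) : 2 * (Tri n).card = (n+1) * (n+2) := by
  have hd : ∀ x ∈ range (n+1), ∀ y ∈ range (n+1), x ≠ y →
      Disjoint (Finset.HasAntidiagonal.antidiagonal x) (Finset.HasAntidiagonal.antidiagonal y) := by
    intro x _ y _ hxy
    simp only [Finset.disjoint_left, Finset.HasAntidiagonal.mem_antidiagonal]
    rintro a rfl rfl; exact hxy rfl
  rw [Tri, Finset.card_biUnion hd]
  have h1 : ∑ s ∈ range (n+1), (Finset.HasAntidiagonal.antidiagonal s).card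
      = ∑ s ∈ range (n+1), (s+1) := by
    exact Finset.sum_congr rfl fun s _ => Finset.Nat.card_antidiagonal s
  have key : ∑ s ∈ range (n+1), (s+1) = ∑ s ∈ range (n+2), s := by
    symm
    rw [Finset.sum_range_succ' (fun i => i) (n+1)]
    simp
  have h2 : (∑ s ∈ range (n+2), s) * 2 = (n+2) * (n+1) := by
    simpa using Finset.sum_range_id_mul_two (n+2)
  rw [h1, key]
  rw [Nat.mul_comm]
  rw [h2]
  ring

private def Sfin (r : ℕ) : Finset (ℕ × ℕ × ℕ) :=
  ((range (r+1)) ×ˢ (range (r+1)) ×ˢ (range (r+1))).filter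
    (fun p => p.1 + p.2.1 ≤ r ∧ p.1 + p.2.2 ≤ r ∧ p.2.1 + p.2.2 ≤ r)

private lemma mem_Sfin {r a b c : ℕ} :
    (a, b, c) ∈ Sfin r ↔ a + b ≤ r ∧ a + c ≤ r ∧ b + c ≤ r := by
  simp only [Sfin, mem_filter, mem_product, mem_range, Nat.lt_succ_iff]
  omega

private lemma card_Sfin_step (r : ℕ) :
    (Sfin (r+2)).card =
      (Tri (r+2)).card + (Tri (r+1)).card + (Tri r).card + (Sfin r).card := by
  classical
  have h1 := Finset.card_filter_add_card_filter_not
    (s := Sfin (r+2)) (p := fun p => p.1 = 0)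
  have h2 := Finset.card_filter_add_card_filter_not
    (s := (Sfin (r+2)).filter (fun p => ¬ p.1 = 0)) (p := fun p => p.2.1 = 0)
  have h3 := Finset.card_filter_add_card_filter_not
    (s := ((Sfin (r+2)).filter (fun p => ¬ p.1 = 0)).filter (fun p => ¬ p.2.1 = 0))
    (p := fun p => p.2.2 = 0)
  have e1 : ((Sfin (r+2)).filter (fun p => p.1 = 0)).card = (Tri (r+2)).card := by
    refine Finset.card_bij' (fun p _ => (p.2.1, p.2.2)) (fun q _ => (0, q.1, q.2))
      ?_ ?_ ?_ ?_
    · rintro ⟨a, b, c⟩ hp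
      simp only [mem_filter, mem_Sfin] at hp
      rw [mem_Tri]; (try dsimp only); omega
    · rintro ⟨x, y⟩ hq
      rw [mem_Tri] at hq
      simp [mem_filter, mem_Sfin]; omega
    · rintro ⟨a, b, c⟩ hp
      simp only [mem_filter, mem_Sfin] at hp
      simp [Prod.mk.injEq]; omega
    · rintro ⟨x, y⟩ _; rfl
  have e2 : (((Sfin (r+2)).filter (fun p => ¬ p.1 = 0)).filter (fun p => p.2.1 = 0)).card
      = (Tri (r+1)).card := by
    refine Finset.card_bij' (fun p _ => (p.1 - 1, p.2.2)) (fun q _ => (q.1 + 1, 0, q.2))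
      ?_ ?_ ?_ ?_
    · rintro ⟨a, b, c⟩ hp
      simp only [mem_filter, mem_Sfin] at hp
      rw [mem_Tri]; (try dsimp only); omega
    · rintro ⟨x, y⟩ hq
      rw [mem_Tri] at hq
      simp [mem_filter, mem_Sfin]; omega
    · rintro ⟨a, b, c⟩ hp
      simp only [mem_filter, mem_Sfin] at hp
      simp [Prod.mk.injEq]; omega
    · rintro ⟨x, y⟩ _; simp
  have e3 : ((((Sfin (r+2)).filter (fun p => ¬ p.1 = 0)).filter
      (fun p => ¬ p.2.1 = 0)).filter (fun p => p.2.2 = 0)).card = (Tri r).card := by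
    refine Finset.card_bij' (fun p _ => (p.1 - 1, p.2.1 - 1))
      (fun q _ => (q.1 + 1, q.2 + 1, 0)) ?_ ?_ ?_ ?_
    · rintro ⟨a, b, c⟩ hp
      simp only [mem_filter, mem_Sfin] at hp
      rw [mem_Tri]; (try dsimp only); omega
    · rintro ⟨x, y⟩ hq
      rw [mem_Tri] at hq
      simp [mem_filter, mem_Sfin]; omega
    · rintro ⟨a, b, c⟩ hp
      simp only [mem_filter, mem_Sfin] at hp
      simp [Prod.mk.injEq]; omega
    · rintro ⟨x, y⟩ _; simp
  have e4 : ((((Sfin (r+2)).filter (fun p => ¬ p.1 = 0)).filter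
      (fun p => ¬ p.2.1 = 0)).filter (fun p => ¬ p.2.2 = 0)).card = (Sfin r).card := by
    refine Finset.card_bij' (fun p _ => (p.1 - 1, p.2.1 - 1, p.2.2 - 1))
      (fun q _ => (q.1 + 1, q.2.1 + 1, q.2.2 + 1)) ?_ ?_ ?_ ?_
    · rintro ⟨a, b, c⟩ hp
      simp only [mem_filter, mem_Sfin] at hp
      rw [mem_Sfin]; (try dsimp only); omega
    · rintro ⟨x, y, z⟩ hq
      rw [mem_Sfin] at hq
      simp [mem_filter, mem_Sfin]; omega
    · rintro ⟨a, b, c⟩ hp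
      simp only [mem_filter, mem_Sfin] at hp
      simp [Prod.mk.injEq]; omega
    · rintro ⟨x, y, z⟩ _; rfl
  omega

private lemma card_Sfin (r : ℕ) :
    8 * (Sfin r).card = 2*r^3 + 9*r^2 + 14*r + (if Even r then 8 else 7) := by
  induction r using Nat.twoStepInduction with
  | zero => decide
  | one => decide
  | more r ih _ =>
    rw [card_Sfin_step]
    have hT2 := card_Tri (r+2)
    have hT1 := card_Tri (r+1)
    have hT0 := card_Tri r
    have hpar : Even (r+2) ↔ Even r := by simp [Nat.even_add]
    have expand : 8 * ((Tri (r+2)).card + (Tri (r+1)).card + (Tri r).card + (Sfin r).card)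
        = 4*(2*(Tri (r+2)).card) + 4*(2*(Tri (r+1)).card) + 4*(2*(Tri r).card)
          + 8*(Sfin r).card := by ring
    rw [expand, hT2, hT1, hT0, ih]
    by_cases h : Even r
    · rw [if_pos (hpar.mpr h), if_pos h]; ring
    · rw [if_neg (fun hh => h (hpar.mp hh)), if_neg h]; ring

private def matEquiv (r : ℕ) :
    {M : Matrix (Fin 3) (Fin 3) ℕ // M.IsSymm ∧ ∀ i, ∑ j, M i j = r} ≃
      {p : ℕ × ℕ × ℕ // p ∈ Sfin r} where
  toFun := fun M => ⟨(M.1 0 1, M.1 0 2, M.1 1 2), by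
    obtain ⟨M, hs, hr⟩ := M
    show (M 0 1, M 0 2, M 1 2) ∈ Sfin r
    have h0 := hr 0
    have h1 := hr 1
    have h2 := hr 2
    rw [Fin.sum_univ_three] at h0 h1 h2
    have s10 : M 0 1 = M 1 0 := hs.apply 1 0
    have s20 : M 0 2 = M 2 0 := hs.apply 2 0
    have s21 : M 1 2 = M 2 1 := hs.apply 2 1
    rw [mem_Sfin]
    omega⟩
  invFun := fun q => ⟨!![r - q.1.1 - q.1.2.1, q.1.1, q.1.2.1;
      q.1.1, r - q.1.1 - q.1.2.2, q.1.2.2;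
      q.1.2.1, q.1.2.2, r - q.1.2.1 - q.1.2.2], by
    obtain ⟨⟨a, b, c⟩, hq⟩ := q
    dsimp only
    rw [mem_Sfin] at hq
    constructor
    · unfold Matrix.IsSymm
      ext i j
      fin_cases i <;> fin_cases j <;> rfl
    · intro i
      fin_cases i <;>
        simp [Fin.sum_univ_three] <;> omega⟩
  left_inv := by
    rintro ⟨M, hs, hr⟩
    have h0 := hr 0
    have h1 := hr 1
    have h2 := hr 2
    rw [Fin.sum_univ_three] at h0 h1 h2
    have s10 : M 0 1 = M 1 0 := hs.apply 1 0
    have s20 : M 0 2 = M 2 0 := hs.apply 2 0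
    have s21 : M 1 2 = M 2 1 := hs.apply 2 1
    apply Subtype.ext
    dsimp only
    ext i j
    fin_cases i <;> fin_cases j <;> simp <;> omega
  right_inv := by
    rintro ⟨⟨a, b, c⟩, hq⟩
    apply Subtype.ext
    simp

/-- The number of 3×3 symmetric matrices with nonnegative integer entries whose
rows all sum to `r`. -/
theorem symmetric_magic3_count (r : ℕ) :
    (Nat.card {M : Matrix (Fin 3) (Fin 3) ℕ //
        M.IsSymm ∧ ∀ i, ∑ j, M i j = r} : ℚ) =
      if Even r then (1/4) * (r:ℚ)^3 + (9/8) * (r:ℚ)^2 + (7/4) * (r:ℚ) + 1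
      else (1/4) * (r:ℚ)^3 + (9/8) * (r:ℚ)^2 + (7/4) * (r:ℚ) + 7/8 := by
  have hc : Nat.card {M : Matrix (Fin 3) (Fin 3) ℕ //
      M.IsSymm ∧ ∀ i, ∑ j, M i j = r} = (Sfin r).card := by
    rw [Nat.card_congr (matEquiv r)]
    exact Nat.card_eq_finsetCard _
  rw [hc]
  have h8 := card_Sfin r
  by_cases h : Even r
  · rw [if_pos h]
    rw [if_pos h] at h8
    have h8q : (8 : ℚ) * ((Sfin r).card : ℚ)
        = 2*(r:ℚ)^3 + 9*(r:ℚ)^2 + 14*(r:ℚ) + 8 := by exact_mod_cast h8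
    linarith
  · rw [if_neg h]
    rw [if_neg h] at h8
    have h8q : (8 : ℚ) * ((Sfin r).card : ℚ)
        = 2*(r:ℚ)^3 + 9*(r:ℚ)^2 + 14*(r:ℚ) + 7 := by exact_mod_cast h8
    linarith
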